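/- Let h, w, k : ℤ⁺ → ℤ⁺ with k ≻ 1. If k ≼ h and h ≼ k·w², then L^k[h, w] ≍ w·√(h·k); that is, there exist constants 0 < a ≤ b with a·w(n)·√(h(n)·k(n)) ≤ L^{k(n)}[h(n), w(n)] ≤ b·w(n)·√(h(n)·k(n)) for all large n. -/

import Mathlib

open Filter

/-- A Kostant picture of height `η`. -/
def IsKostant {w : ℕ} (η : Fin w → ℕ) (c : Fin w → Fin w → ℕ) : Prop :=
  (∀ i j : Fin w, j < i → c i j = 0) ∧
  ∀ m : Fin w, (∑ i : Fin w, ∑ j : Fin w, (if i ≤ m ∧ m ≤ j then c i j else 0)) = η m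

/-- Kostant's partition function. -/
noncomputable def KPF {w : ℕ} (η : Fin w → ℕ) : ℕ :=
  Set.ncard {c : Fin w → Fin w → ℕ | IsKostant η c}

/-- `L[h,w] = ln KPF[(h,…,h)]` for the constant tuple of length `w`. -/
noncomputable def Lbox (h w : ℕ) : ℝ := Real.log (KPF (fun _ : Fin w => h))

/-- `T^k[η]`: the maximal number of `k`-colorings of a Kostant picture of height `η`,
where a picture `c` has `∏_{i ≤ j} C(c i j + k - 1, k - 1)` colorings. -/
noncomputable def Tcol {w : ℕ} (k : ℕ) (η : Fin w → ℕ) : ℕ :=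
  sSup ((fun c : Fin w → Fin w → ℕ =>
      ∏ i : Fin w, ∏ j : Fin w,
        (if i ≤ j then Nat.choose (c i j + k - 1) (k - 1) else 1)) ''
    {c : Fin w → Fin w → ℕ | IsKostant η c})

/-- `L^k[h,w] = ln T^k[(h,…,h)]` for the constant tuple of length `w`. -/
noncomputable def Lcol (k h w : ℕ) : ℝ := Real.log (Tcol k (fun _ : Fin w => h))


namespace KAux
open Finset Nat

variable {w : ℕ}

lemma two_pow_le_central : ∀ m : ℕ, 2 ^ m ≤ (2*m).choose m
  | 0 => le_refl 1
  | m+1 => by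
    have ih := two_pow_le_central m
    have h1 : (2*m).choose m ≤ (2*m+1).choose m := Nat.choose_le_choose m (by omega)
    have h2 : (2*m).choose m ≤ (2*m+1).choose (m+1) := by
      rw [Nat.choose_succ_succ]
      omega
    have h3 : (2*(m+1)).choose (m+1) = (2*m+1).choose m + (2*m+1).choose (m+1) := by
      have he : 2*(m+1) = (2*m+1) + 1 := by ring
      rw [he, Nat.choose_succ_succ]
    have : 2^(m+1) = 2^m + 2^m := by ring
    omega

lemma two_pow_min_le (a b : ℕ) : 2 ^ (min a b) ≤ (a + b).choose b := by
  rcases le_total a b with hab | hab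
  · rw [min_eq_left hab]
    calc 2^a ≤ (2*a).choose a := two_pow_le_central a
    _ ≤ (a+b).choose a := Nat.choose_le_choose a (by omega)
    _ = (a+b).choose b := by
        have := Nat.choose_symm (show a ≤ a + b by omega)
        simpa [Nat.add_sub_cancel_left] using this.symm
  · rw [min_eq_right hab]
    calc 2^b ≤ (2*b).choose b := two_pow_le_central b
    _ ≤ (a+b).choose b := Nat.choose_le_choose b (by omega)

lemma log_factorial_ge (n : ℕ) : (n:ℝ) * Real.log n - n ≤ Real.log (n !) := by
  induction n with
  | zero => simp
  | succ n ih =>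
    have h1 : Real.log ((n+1)! ) = Real.log ((n:ℝ)+1) + Real.log (n !) := by
      rw [Nat.factorial_succ]
      push_cast
      rw [Real.log_mul (by positivity) (by exact_mod_cast (Nat.factorial_pos n).ne')]
    rcases Nat.eq_zero_or_pos n with rfl | hn
    · simp
    · have hn' : (0:ℝ) < n := by exact_mod_cast hn
      have key : (n:ℝ) * Real.log (n+1) - n * Real.log n ≤ 1 := by
        have ht : Real.log (((n:ℝ)+1)/n) ≤ ((n:ℝ)+1)/n - 1 :=
          Real.log_le_sub_one_of_pos (by positivity)
        rw [Real.log_div (by positivity) (by positivity)] at ht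
        have : ((n:ℝ)+1)/n - 1 = 1/n := by field_simp; ring
        rw [this] at ht
        have h2 : (n:ℝ) * (Real.log (n+1) - Real.log n) ≤ n * (1/n) := by
          apply mul_le_mul_of_nonneg_left ht (le_of_lt hn')
        rw [mul_one_div, div_self (ne_of_gt hn')] at h2
        nlinarith
      push_cast
      push_cast at h1
      rw [h1]
      nlinarith [ih]

lemma log_choose_le {n r : ℕ} (h : r ≤ n) :
    Real.log (n.choose r) ≤ r * Real.log n - Real.log (r !) := by
  have h1 : n.choose r * r ! ≤ n ^ r := by
    rw [mul_comm, ← Nat.descFactorial_eq_factorial_mul_choose]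
    exact Nat.descFactorial_le_pow _ _
  have hpos : (0:ℝ) < (n.choose r : ℝ) := by exact_mod_cast Nat.choose_pos h
  have hfpos : (0:ℝ) < (r ! : ℝ) := by exact_mod_cast Nat.factorial_pos r
  have h2 : Real.log ((n.choose r : ℝ) * (r ! : ℝ)) ≤ Real.log ((n:ℝ) ^ r) := by
    apply Real.log_le_log (by positivity)
    exact_mod_cast h1
  rw [Real.log_mul (ne_of_gt hpos) (ne_of_gt hfpos), Real.log_pow] at h2
  linarith


/-- Bound for small λ : log C(c+k-1, k-1) ≤ λ c + k (log(1/λ)+1). -/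
lemma branch1 {k c : ℕ} (hk : 1 ≤ k) {lam : ℝ} (h0 : 0 < lam) (h1 : lam ≤ 1) :
    Real.log (((c + k - 1).choose (k-1) : ℕ)) ≤ lam * c + (k:ℝ) * (Real.log (1/lam) + 1) := by
  have hlog0 : 0 ≤ Real.log (1/lam) := by
    apply Real.log_nonneg
    rw [le_div_iff₀ h0]; linarith
  rcases Nat.lt_or_ge k 2 with hk2 | hk2
  · -- k = 1
    interval_cases k
    simp only [Nat.add_sub_cancel, Nat.sub_self, Nat.choose_zero_right]
    push_cast
    rw [Real.log_one]
    positivity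
  · set r := k - 1 with hr
    have hr1 : 1 ≤ r := by omega
    have hrpos : (0:ℝ) < r := by exact_mod_cast hr1
    have hn : c + k - 1 = c + r := by omega
    rw [hn]
    have h2 : Real.log ((c+r).choose r) ≤ r * Real.log (c+r) - Real.log (r !) := by
      exact_mod_cast log_choose_le (by omega)
    have h3 : Real.log (r !) ≥ (r:ℝ) * Real.log r - r := log_factorial_ge r
    -- tangent : log y ≤ log(1/lam) + lam*y - 1 for y > 0
    have hcr : (0:ℝ) < (c:ℝ) + r := by positivity
    have htan : Real.log ((c:ℝ)+r) - Real.log r ≤ Real.log (1/lam) + lam * (((c:ℝ)+r)/r) - 1 := by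
      have hy : (0:ℝ) < lam * (((c:ℝ)+r)/r) := by positivity
      have := Real.log_le_sub_one_of_pos hy
      rw [Real.log_mul (ne_of_gt h0) (by positivity), Real.log_div (ne_of_gt hcr) (ne_of_gt hrpos)] at this
      have hli : Real.log (1/lam) = - Real.log lam := by
        rw [one_div, Real.log_inv]
      rw [hli]
      linarith [this]
    -- combine : log C ≤ r(log(c+r) - log r) + r ≤ r log(1/lam) + lam (c+r)
    have h4 : (r:ℝ) * (Real.log ((c:ℝ)+r) - Real.log r) ≤ (r:ℝ)*Real.log (1/lam) + lam*((c:ℝ)+r) - r := by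
      have h6 := mul_le_mul_of_nonneg_left htan (le_of_lt hrpos)
      have hexp : (r:ℝ) * (Real.log (1/lam) + lam * (((c:ℝ)+r)/r) - 1)
          = (r:ℝ)*Real.log (1/lam) + lam*((c:ℝ)+r) - r := by
        field_simp
      rw [hexp] at h6
      nlinarith [h6]
    have hcast : ((c:ℝ) + (r:ℝ)) = ((c + r : ℕ) : ℝ) := by push_cast; ring
    have h5 : Real.log ((c+r).choose r) ≤ (r:ℝ)*Real.log (1/lam) + lam*((c:ℝ)+r) := by
      push_cast at h2 h3 h4 ⊢
      linarith
    have hrk : (r:ℝ) ≤ k := by exact_mod_cast Nat.sub_le k 1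
    have hck : (0:ℝ) ≤ (c:ℝ) := by positivity
    have hkk : (0:ℝ) < (k:ℝ) := by exact_mod_cast hk
    calc Real.log ((c+r).choose r) ≤ (r:ℝ)*Real.log (1/lam) + lam*((c:ℝ)+r) := h5
    _ ≤ lam * c + (k:ℝ) * (Real.log (1/lam) + 1) := by
        have e1 : (r:ℝ)*Real.log (1/lam) ≤ (k:ℝ)*Real.log (1/lam) :=
          mul_le_mul_of_nonneg_right hrk hlog0
        have e2 : lam * (r:ℝ) ≤ (k:ℝ) := by nlinarith
        nlinarith

/-- Bound for λ ≥ 1 : log C(c+k-1, k-1) ≤ λ c + k exp(1-λ). -/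
lemma branch2 {k c : ℕ} (hk : 1 ≤ k) {lam : ℝ} (h1 : 1 ≤ lam) :
    Real.log (((c + k - 1).choose (k-1) : ℕ)) ≤ lam * c + (k:ℝ) * Real.exp (1 - lam) := by
  rcases Nat.eq_zero_or_pos c with rfl | hc
  · have : (0 + k - 1).choose (k-1) = 1 := by
      simp [Nat.choose_self]
    rw [this]
    push_cast
    rw [Real.log_one]
    positivity
  · have hcpos : (0:ℝ) < c := by exact_mod_cast hc
    -- choose symm : C(c+k-1, k-1) = C(c+k-1, c)
    have hsymm : (c + k - 1).choose (k-1) = (c + k - 1).choose c := by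
      have h' : k - 1 ≤ c + k - 1 := by omega
      have := Nat.choose_symm h'
      have he : c + k - 1 - (k-1) = c := by omega
      rw [he] at this
      exact this.symm
    rw [hsymm]
    have h2 : Real.log ((c+k-1).choose c) ≤ (c:ℝ) * Real.log (((c+k-1 : ℕ) : ℝ)) - Real.log (c !) :=
      log_choose_le (show c ≤ c + k - 1 by omega)
    have h3 : Real.log (c !) ≥ (c:ℝ) * Real.log c - c := log_factorial_ge c
    have hck : (0:ℝ) < (c:ℝ) + k := by positivity
    have hmono : Real.log ((c + k - 1 : ℕ)) ≤ Real.log ((c:ℝ)+k) := by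
      apply Real.log_le_log (by exact_mod_cast (show 0 < c + k - 1 by omega))
      push_cast [Nat.cast_sub (show 1 ≤ c + k by omega)]
      norm_num
    -- tangent at a = exp(lam - 1) : log x ≤ (lam - 1) + x * exp(1-lam) - 1
    have htan : Real.log (((c:ℝ)+k)/c) ≤ (lam - 1) + (((c:ℝ)+k)/c) * Real.exp (1-lam) - 1 := by
      have hx : (0:ℝ) < ((c:ℝ)+k)/c := by positivity
      have h4 := Real.log_le_sub_one_of_pos (show (0:ℝ) < (((c:ℝ)+k)/c) * Real.exp (1-lam) by positivity)
      rw [Real.log_mul (ne_of_gt hx) (ne_of_gt (Real.exp_pos _)), Real.log_exp] at h4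
      linarith
    have hlogdiv : Real.log (((c:ℝ)+k)/c) = Real.log ((c:ℝ)+k) - Real.log c := by
      rw [Real.log_div (ne_of_gt hck) (ne_of_gt hcpos)]
    have hexple : Real.exp (1 - lam) ≤ 1 := by
      rw [show (1:ℝ) - lam = -(lam - 1) by ring]
      calc Real.exp (-(lam-1)) ≤ Real.exp 0 := by
            apply Real.exp_le_exp.mpr; linarith
      _ = 1 := Real.exp_zero
    have key : (c:ℝ) * Real.log (((c:ℝ)+k)/c) ≤ (lam - 2) * c + ((c:ℝ)+k) * Real.exp (1-lam) := by
      have := mul_le_mul_of_nonneg_left htan (le_of_lt hcpos)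
      have he : (c:ℝ) * ((((c:ℝ)+k)/c) * Real.exp (1-lam)) = ((c:ℝ)+k) * Real.exp (1-lam) := by
        field_simp
      nlinarith [this]
    have hexp0 : (0:ℝ) ≤ Real.exp (1-lam) := le_of_lt (Real.exp_pos _)
    calc Real.log ((c+k-1).choose c)
        ≤ (c:ℝ) * Real.log (((c+k-1 : ℕ) : ℝ)) - Real.log (c !) := h2
      _ ≤ (c:ℝ) * Real.log ((c:ℝ)+k) - ((c:ℝ)*Real.log c - c) := by
          nlinarith [mul_le_mul_of_nonneg_left hmono (show (0:ℝ) ≤ c by positivity)]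
      _ = (c:ℝ) * Real.log (((c:ℝ)+k)/c) + c := by rw [hlogdiv]; ring
      _ ≤ (lam - 2)*c + ((c:ℝ)+k)*Real.exp (1-lam) + c := by linarith [key]
      _ ≤ lam * c + (k:ℝ) * Real.exp (1-lam) := by nlinarith [hexple, hcpos, hexp0]


lemma sum_exp_le {μ : ℝ} (h0 : 0 < μ) (n : ℕ) :
    ∑ d ∈ Finset.range n, Real.exp (1 - μ * (d+1)) ≤ Real.exp 1 / μ := by
  set r := Real.exp (-μ) with hrdef
  have hr0 : 0 < r := Real.exp_pos _
  have hr1 : r < 1 := by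
    rw [hrdef, Real.exp_lt_one_iff]; linarith
  have hterm : ∀ d : ℕ, Real.exp (1 - μ * (d+1)) = (Real.exp 1 * r) * r ^ d := by
    intro d
    rw [hrdef, ← Real.exp_nat_mul]
    rw [← Real.exp_add, ← Real.exp_add]
    congr 1
    push_cast
    ring
  simp_rw [hterm]
  rw [← Finset.mul_sum]
  have hsum : ∑ d ∈ Finset.range n, r ^ d ≤ 1 / (1 - r) := by
    have h1r : 0 < 1 - r := by linarith
    have hg := geom_sum_eq (ne_of_lt hr1) n
    have hg2 : ∑ d ∈ Finset.range n, r ^ d = (1 - r^n)/(1-r) := by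
      rw [hg, show (1:ℝ)-r^n = -(r^n-1) by ring, show (1:ℝ)-r = -(r-1) by ring, neg_div_neg_eq]
    rw [hg2, div_le_div_iff₀ h1r h1r]
    have hpow : 0 ≤ r ^ n := le_of_lt (pow_pos hr0 n)
    nlinarith
  have hkey : Real.exp 1 * r * (1/(1-r)) ≤ Real.exp 1 / μ := by
    rw [mul_one_div, div_le_div_iff₀ (by linarith) h0]
    have hcomp : r * (1 + μ) ≤ 1 := by
      have := Real.add_one_le_exp μ
      have hre : r * Real.exp μ = 1 := by
        rw [hrdef, ← Real.exp_add]; simp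
      nlinarith [hr0]
    nlinarith [Real.exp_pos 1, hr0]
  calc Real.exp 1 * r * ∑ d ∈ Finset.range n, r ^ d
      ≤ Real.exp 1 * r * (1/(1-r)) := by
        apply mul_le_mul_of_nonneg_left hsum (by positivity)
    _ ≤ Real.exp 1 / μ := hkey

lemma sum_logpart_le {μ : ℝ} (h0 : 0 < μ) (h1 : μ ≤ 1) (k n : ℕ) :
    ∑ d ∈ Finset.range n, (if μ * (d+1) < 1 then (k:ℝ) * (Real.log (1/(μ*(d+1))) + 1) else 0)
      ≤ 4 * k / μ := by
  set M := ⌈1/μ⌉₊ with hMdef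
  have hinv1 : (1:ℝ) ≤ 1/μ := by
    rw [le_div_iff₀ h0]; linarith
  have hMμ : (1:ℝ)/μ ≤ M := Nat.le_ceil _
  have hM1 : 1 ≤ M := by
    have : (0:ℝ) < M := lt_of_lt_of_le (by linarith) hMμ
    exact_mod_cast Nat.pos_of_ne_zero (by rintro h; rw [h] at this; simp at this)
  have hM2 : (M:ℝ) ≤ 2/μ := by
    have := Nat.ceil_lt_add_one (show (0:ℝ) ≤ 1/μ by linarith)
    have h2 : (M:ℝ) < 1/μ + 1 := this
    have : (1:ℝ) ≤ 1/μ := hinv1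
    have h3 : 2/μ = 1/μ + 1/μ := by ring
    linarith
  have hterm : ∀ d : ℕ, (if μ * (d+1) < 1 then (k:ℝ) * (Real.log (1/(μ*(d+1))) + 1) else 0)
      ≤ (if d < M then (k:ℝ) * (Real.log M - Real.log (d+1) + 1) else 0) := by
    intro d
    have hd1 : (0:ℝ) < (d:ℝ)+1 := by positivity
    split_ifs with hc hd hd
    · -- both
      have hle : Real.log (1/(μ*(d+1))) ≤ Real.log M - Real.log (d+1) := by
        rw [one_div, Real.log_inv, Real.log_mul (ne_of_gt h0) (ne_of_gt hd1)]
        have : Real.log (1/μ) ≤ Real.log M :=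
          Real.log_le_log (by positivity) hMμ
        rw [one_div, Real.log_inv] at this
        linarith
      have hk0 : (0:ℝ) ≤ k := by positivity
      nlinarith
    · -- μ(d+1) < 1 but ¬ d < M : contradiction
      exfalso
      apply hd
      have hdlt : ((d:ℝ)+1) < 1/μ := by
        rw [lt_div_iff₀ h0]; nlinarith
      have : ((d:ℝ)+1) < M := lt_of_lt_of_le hdlt hMμ
      have : (d:ℝ) < M := by linarith
      exact_mod_cast this
    · -- rhs branch : nonneg
      have hdM : (d:ℝ)+1 ≤ M := by
        have : (d:ℝ) < M := by exact_mod_cast hd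
        have hdi : (d:ℝ) + 1 ≤ M := by
          have : (d:ℕ) + 1 ≤ M := by exact_mod_cast hd
          exact_mod_cast this
        exact hdi
      have : Real.log (d+1) ≤ Real.log M := Real.log_le_log hd1 hdM
      have hk0 : (0:ℝ) ≤ k := by positivity
      nlinarith
    · exact le_refl _
  calc ∑ d ∈ Finset.range n, (if μ * (d+1) < 1 then (k:ℝ) * (Real.log (1/(μ*(d+1))) + 1) else 0)
      ≤ ∑ d ∈ Finset.range n, (if d < M then (k:ℝ) * (Real.log M - Real.log (d+1) + 1) else 0) :=
        Finset.sum_le_sum (fun d _ => hterm d)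
    _ ≤ ∑ d ∈ Finset.range M, (k:ℝ) * (Real.log M - Real.log (d+1) + 1) := by
        rw [← Finset.sum_filter]
        apply Finset.sum_le_sum_of_subset_of_nonneg
        · intro x hx
          simp only [Finset.mem_filter, Finset.mem_range] at hx ⊢
          exact hx.2
        · intro d hd _
          simp only [Finset.mem_range] at hd
          have hd1 : (0:ℝ) < (d:ℝ)+1 := by positivity
          have hdM : (d:ℝ)+1 ≤ M := by exact_mod_cast hd
          have : Real.log (d+1) ≤ Real.log M := Real.log_le_log hd1 hdM
          have hk0 : (0:ℝ) ≤ k := by positivity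
          nlinarith
    _ = (k:ℝ) * ((M:ℝ) * Real.log M + M - Real.log (M !)) := by
        rw [← Finset.mul_sum]
        congr 1
        have hfac : ∑ d ∈ Finset.range M, Real.log ((d:ℝ)+1) = Real.log (M !) := by
          rw [← Real.log_prod (fun d _ => by positivity)]
          congr 1
          rw [← Finset.prod_range_add_one_eq_factorial M]
          push_cast
          rfl
        rw [Finset.sum_add_distrib, Finset.sum_sub_distrib, Finset.sum_const, Finset.sum_const,
          Finset.card_range, hfac]
        push_cast
        ring
    _ ≤ (k:ℝ) * (2 * M) := by
        have := log_factorial_ge M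
        have hk0 : (0:ℝ) ≤ k := by positivity
        nlinarith
    _ ≤ 4 * k / μ := by
        rw [div_eq_mul_inv]
        have hk0 : (0:ℝ) ≤ k := by positivity
        have hMle : (M:ℝ) ≤ 2 * μ⁻¹ := by rw [div_eq_mul_inv] at hM2; exact hM2
        have hμinv : 0 < μ⁻¹ := by positivity
        nlinarith


lemma diag_sum (m : Fin w) (p : Fin w → ℕ) :
    (∑ i : Fin w, ∑ j : Fin w, (if i ≤ m ∧ m ≤ j then (if i = j then p i else 0) else 0)) = p m := by
  have hc : ∀ i j : Fin w, (if i ≤ m ∧ m ≤ j then (if i = j then p i else 0) else 0)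
      = if i = m then (if j = m then p m else 0) else 0 := by
    intro i j
    by_cases h2 : i = m ∧ j = m
    · have hA : i ≤ m ∧ m ≤ j := ⟨le_of_eq h2.1, le_of_eq h2.2.symm⟩
      rw [if_pos h2.1, if_pos h2.2, if_pos hA, if_pos (h2.1.trans h2.2.symm), h2.1]
    · have hR : (if i = m then (if j = m then p m else 0) else 0) = 0 := by
        split_ifs with ha hb
        · exact absurd ⟨ha, hb⟩ h2
        · rfl
        · rfl
      rw [hR]
      split_ifs with ha hb
      · exfalso
        apply h2
        have v1 : i.val ≤ m.val := Fin.le_def.mp ha.1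
        have v2 : m.val ≤ j.val := Fin.le_def.mp ha.2
        have v3 : i.val = j.val := congrArg Fin.val hb
        exact ⟨Fin.ext (by omega), Fin.ext (by omega)⟩
      · rfl
      · rfl
  rw [Finset.sum_congr rfl fun i _ => Finset.sum_congr rfl fun j _ => hc i j]
  simp

lemma isKostant_diag (h : ℕ) :
    IsKostant (fun _ : Fin w => h) (fun i j => if i = j then h else 0) := by
  constructor
  · intro i j hji
    exact if_neg (fun e => absurd e (by rintro rfl; exact lt_irrefl _ hji))
  · intro m
    simpa using diag_sum m (fun _ => h)

lemma entry_le {η : Fin w → ℕ} {c : Fin w → Fin w → ℕ} (hc : IsKostant η c) (i j : Fin w) :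
    c i j ≤ η i := by
  rcases le_or_gt i j with hij | hij
  · have h2 := hc.2 i
    calc c i j = (if i ≤ i ∧ i ≤ j then c i j else 0) := by simp [hij]
    _ ≤ ∑ j' : Fin w, (if i ≤ i ∧ i ≤ j' then c i j' else 0) :=
        Finset.single_le_sum (f := fun j' => if i ≤ i ∧ i ≤ j' then c i j' else 0)
          (fun _ _ => Nat.zero_le _) (mem_univ j)
    _ ≤ ∑ i' : Fin w, ∑ j' : Fin w, (if i' ≤ i ∧ i ≤ j' then c i' j' else 0) :=
        Finset.single_le_sum (f := fun i' => ∑ j' : Fin w, (if i' ≤ i ∧ i ≤ j' then c i' j' else 0))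
          (fun _ _ => Nat.zero_le _) (mem_univ i)
    _ = η i := h2
  · rw [hc.1 i j hij]
    exact Nat.zero_le _

lemma bddAbove_im (k h : ℕ) : BddAbove ((fun c : Fin w → Fin w → ℕ =>
    ∏ i : Fin w, ∏ j : Fin w, (if i ≤ j then Nat.choose (c i j + k - 1) (k - 1) else 1)) ''
    {c | IsKostant (fun _ : Fin w => h) c}) := by
  use (max 1 (Nat.choose (h + k - 1) (k-1))) ^ (w * w)
  rintro x ⟨c, hc, rfl⟩
  have hfac : ∀ i j : Fin w, (if i ≤ j then Nat.choose (c i j + k - 1) (k - 1) else 1)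
      ≤ max 1 (Nat.choose (h + k - 1) (k-1)) := by
    intro i j
    split_ifs with hij
    · refine le_max_of_le_right ?_
      apply Nat.choose_le_choose
      have := entry_le hc i j
      omega
    · exact le_max_left _ _
  calc ∏ i : Fin w, ∏ j : Fin w, (if i ≤ j then Nat.choose (c i j + k - 1) (k - 1) else 1)
      ≤ ∏ i : Fin w, (max 1 (Nat.choose (h + k - 1) (k-1))) ^ w := by
        apply Finset.prod_le_prod'
        intro i _
        calc ∏ j : Fin w, (if i ≤ j then Nat.choose (c i j + k - 1) (k - 1) else 1)
            ≤ ∏ _j : Fin w, (max 1 (Nat.choose (h + k - 1) (k-1))) :=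
              Finset.prod_le_prod' (fun j _ => hfac i j)
        _ = (max 1 (Nat.choose (h + k - 1) (k-1))) ^ w := by
              rw [Finset.prod_const, Finset.card_univ, Fintype.card_fin]
    _ = (max 1 (Nat.choose (h + k - 1) (k-1))) ^ (w * w) := by
        rw [Finset.prod_const, Finset.card_univ, Fintype.card_fin, ← pow_mul]

lemma tcol_spec (k h : ℕ) : ∃ c : Fin w → Fin w → ℕ, IsKostant (fun _ : Fin w => h) c ∧
    Tcol k (fun _ : Fin w => h) =
      ∏ i : Fin w, ∏ j : Fin w, (if i ≤ j then Nat.choose (c i j + k - 1) (k - 1) else 1) := by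
  have hne : ((fun c : Fin w → Fin w → ℕ =>
      ∏ i : Fin w, ∏ j : Fin w,
        (if i ≤ j then Nat.choose (c i j + k - 1) (k - 1) else 1)) ''
    {c | IsKostant (fun _ : Fin w => h) c}).Nonempty :=
    ⟨_, ⟨_, isKostant_diag h, rfl⟩⟩
  have hmem := Nat.sSup_mem hne (bddAbove_im k h)
  obtain ⟨c, hc, hEq⟩ := hmem
  exact ⟨c, hc, hEq.symm⟩

lemma tcol_ge (k h : ℕ) {c : Fin w → Fin w → ℕ} (hc : IsKostant (fun _ : Fin w => h) c) :
    (∏ i : Fin w, ∏ j : Fin w, (if i ≤ j then Nat.choose (c i j + k - 1) (k - 1) else 1))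
      ≤ Tcol k (fun _ : Fin w => h) :=
  le_csSup (bddAbove_im k h) ⟨c, hc, rfl⟩

lemma factor_pos (k : ℕ) (c : Fin w → Fin w → ℕ) (i j : Fin w) :
    0 < (if i ≤ j then Nat.choose (c i j + k - 1) (k - 1) else 1) := by
  split_ifs
  · exact Nat.choose_pos (by omega)
  · exact Nat.one_pos

lemma log_prod_prod (f : Fin w → Fin w → ℕ) (hf : ∀ i j, 0 < f i j) :
    Real.log ((∏ i : Fin w, ∏ j : Fin w, f i j : ℕ)) = ∑ i : Fin w, ∑ j : Fin w, Real.log (f i j) := by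
  have hcast : ((∏ i : Fin w, ∏ j : Fin w, f i j : ℕ) : ℝ) = ∏ i : Fin w, ∏ j : Fin w, (f i j : ℝ) := by
    push_cast; rfl
  rw [hcast, Real.log_prod (fun i _ => Finset.prod_ne_zero_iff.2
    (fun j _ => by exact_mod_cast (hf i j).ne'))]
  exact Finset.sum_congr rfl fun i _ =>
    Real.log_prod fun j _ => by exact_mod_cast (hf i j).ne'

/-- summing the height constraints : ∑ c i j * (length) = w * h -/
lemma weighted_sum {h : ℕ} {c : Fin w → Fin w → ℕ} (hc : IsKostant (fun _ : Fin w => h) c) :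
    ∑ i : Fin w, ∑ j : Fin w, c i j * (j.val + 1 - i.val) = w * h := by
  have step1 : ∀ i j : Fin w, c i j * (j.val + 1 - i.val)
      = ∑ m : Fin w, (if i ≤ m ∧ m ≤ j then c i j else 0) := by
    intro i j
    rw [← Finset.sum_filter]
    have hflt : Finset.univ.filter (fun m : Fin w => i ≤ m ∧ m ≤ j) = Finset.Icc i j := by
      ext m; simp [Finset.mem_Icc]
    rw [hflt, Finset.sum_const, smul_eq_mul, Fin.card_Icc, mul_comm]
  calc ∑ i : Fin w, ∑ j : Fin w, c i j * (j.val + 1 - i.val)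
      = ∑ i : Fin w, ∑ j : Fin w, ∑ m : Fin w, (if i ≤ m ∧ m ≤ j then c i j else 0) := by
        exact Finset.sum_congr rfl fun i _ => Finset.sum_congr rfl fun j _ => step1 i j
    _ = ∑ m : Fin w, ∑ i : Fin w, ∑ j : Fin w, (if i ≤ m ∧ m ≤ j then c i j else 0) := by
        have h1 : ∀ i : Fin w, ∑ j : Fin w, ∑ m : Fin w, (if i ≤ m ∧ m ≤ j then c i j else 0)
            = ∑ m : Fin w, ∑ j : Fin w, (if i ≤ m ∧ m ≤ j then c i j else 0) :=
          fun i => Finset.sum_comm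
        simp_rw [h1]
        exact Finset.sum_comm
    _ = ∑ _m : Fin w, h := Finset.sum_congr rfl fun m _ => hc.2 m
    _ = w * h := by rw [Finset.sum_const, Finset.card_univ, Fintype.card_fin, smul_eq_mul]


-- new material

lemma sum_I_le (I : ℕ → ℝ) (hI : ∀ d, 0 ≤ I d) :
    ∑ i : Fin w, ∑ j : Fin w, (if i ≤ j then I (j.val + 1 - i.val) else 0)
      ≤ w * ∑ d ∈ Finset.range w, I (d+1) := by
  have inner : ∀ i : Fin w, ∑ j : Fin w, (if i ≤ j then I (j.val + 1 - i.val) else 0)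
      ≤ ∑ d ∈ Finset.range w, I (d+1) := by
    intro i
    have hre : ∑ j : Fin w, (if i ≤ j then I (j.val + 1 - i.val) else 0)
        = ∑ v ∈ Finset.range w, (if i.val ≤ v then I (v + 1 - i.val) else 0) := by
      rw [← Fin.sum_univ_eq_sum_range (fun v => if i.val ≤ v then I (v + 1 - i.val) else 0) w]
      exact Finset.sum_congr rfl fun j _ => if_congr Fin.le_def rfl rfl
    rw [hre, ← Finset.sum_filter]
    have hflt : (Finset.range w).filter (fun v => i.val ≤ v) = Finset.Ico i.val w := by
      ext v
      simp only [Finset.mem_filter, Finset.mem_range, Finset.mem_Ico]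
      omega
    rw [hflt, Finset.sum_Ico_eq_sum_range]
    have hcong : ∀ v : ℕ, I (i.val + v + 1 - i.val) = I (v+1) := fun v => by congr 1; omega
    simp_rw [hcong]
    apply Finset.sum_le_sum_of_subset_of_nonneg
    · exact Finset.range_subset_range.mpr (by omega)
    · intro d _ _; exact hI _
  calc ∑ i : Fin w, ∑ j : Fin w, (if i ≤ j then I (j.val + 1 - i.val) else 0)
      ≤ ∑ _i : Fin w, ∑ d ∈ Finset.range w, I (d+1) := Finset.sum_le_sum (fun i _ => inner i)
    _ = w * ∑ d ∈ Finset.range w, I (d+1) := by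
        rw [Finset.sum_const, Finset.card_univ, Fintype.card_fin, nsmul_eq_mul]

lemma upper_bound (k h : ℕ) (hk : 1 ≤ k) {μ : ℝ} (h0 : 0 < μ) (h1 : μ ≤ 1) :
    Lcol k h w ≤ μ * ((w:ℝ) * h) + w * ((Real.exp 1 + 4) * k / μ) := by
  obtain ⟨c, hc, hT⟩ := tcol_spec (w := w) k h
  set I : ℕ → ℝ := fun L => if μ * L < 1 then (k:ℝ) * (Real.log (1/(μ*L)) + 1)
    else (k:ℝ) * Real.exp (1 - μ*L) with hIdef
  have hI0 : ∀ L, 0 ≤ I L := by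
    intro L
    rw [hIdef]
    simp only
    split_ifs with hL
    · rcases Nat.eq_zero_or_pos L with rfl | hLpos
      · simp
      · have hL1 : (1:ℝ) ≤ 1/(μ*L) := by
          rw [le_div_iff₀ (by positivity)]
          · linarith
        have := Real.log_nonneg hL1
        positivity
    · positivity
  have key : ∀ i j : Fin w,
      Real.log ((if i ≤ j then Nat.choose (c i j + k - 1) (k - 1) else 1 : ℕ))
      ≤ μ * ((j.val + 1 - i.val : ℕ) : ℝ) * (c i j : ℝ)
        + (if i ≤ j then I (j.val + 1 - i.val) else 0) := by
    intro i j
    by_cases hij : i ≤ j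
    · rw [if_pos hij, if_pos hij]
      set L : ℕ := j.val + 1 - i.val with hLdef
      have hL1 : 1 ≤ L := by
        have := Fin.le_def.mp hij
        omega
      have hLpos : (0:ℝ) < L := by exact_mod_cast hL1
      have hlam0 : 0 < μ * L := by positivity
      rw [hIdef]
      simp only
      split_ifs with hlt
      · have := branch1 (c := c i j) hk hlam0 (le_of_lt hlt)
        calc Real.log ((c i j + k - 1).choose (k-1) : ℕ) ≤ (μ*L) * (c i j) + (k:ℝ) * (Real.log (1/(μ*L)) + 1) := this
        _ = μ * (L:ℝ) * (c i j) + (k:ℝ) * (Real.log (1/(μ*L)) + 1) := by ring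
      · have := branch2 (c := c i j) hk (le_of_not_gt hlt)
        calc Real.log ((c i j + k - 1).choose (k-1) : ℕ) ≤ (μ*L) * (c i j) + (k:ℝ) * Real.exp (1 - μ*L) := this
        _ = μ * (L:ℝ) * (c i j) + (k:ℝ) * Real.exp (1 - μ*L) := by ring
    · rw [if_neg hij, if_neg hij]
      have hc0 : c i j = 0 := hc.1 i j (not_le.mp hij)
      rw [hc0]
      push_cast
      rw [Real.log_one]
      simp
  rw [Lcol, hT, log_prod_prod _ (factor_pos k c)]
  have step1 : ∑ i : Fin w, ∑ j : Fin w,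
      Real.log ((if i ≤ j then Nat.choose (c i j + k - 1) (k - 1) else 1 : ℕ))
      ≤ (∑ i : Fin w, ∑ j : Fin w, μ * ((j.val + 1 - i.val : ℕ) : ℝ) * (c i j : ℝ))
        + ∑ i : Fin w, ∑ j : Fin w, (if i ≤ j then I (j.val + 1 - i.val) else 0) := by
    rw [← Finset.sum_add_distrib]
    apply Finset.sum_le_sum
    intro i _
    rw [← Finset.sum_add_distrib]
    exact Finset.sum_le_sum (fun j _ => key i j)
  have step2 : (∑ i : Fin w, ∑ j : Fin w, μ * ((j.val + 1 - i.val : ℕ) : ℝ) * (c i j : ℝ))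
      = μ * ((w:ℝ) * h) := by
    have hws := weighted_sum hc
    have hcast : ((∑ i : Fin w, ∑ j : Fin w, c i j * (j.val + 1 - i.val) : ℕ) : ℝ)
        = ∑ i : Fin w, ∑ j : Fin w, ((j.val + 1 - i.val : ℕ) : ℝ) * (c i j : ℝ) := by
      push_cast
      exact Finset.sum_congr rfl fun i _ => Finset.sum_congr rfl fun j _ => by ring
    have h2 : ∑ i : Fin w, ∑ j : Fin w, ((j.val + 1 - i.val : ℕ) : ℝ) * (c i j : ℝ)
        = (w:ℝ) * h := by
      rw [← hcast, hws]
      push_cast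
      ring
    calc ∑ i : Fin w, ∑ j : Fin w, μ * ((j.val + 1 - i.val : ℕ) : ℝ) * (c i j : ℝ)
        = μ * ∑ i : Fin w, ∑ j : Fin w, ((j.val + 1 - i.val : ℕ) : ℝ) * (c i j : ℝ) := by
          rw [Finset.mul_sum]
          exact Finset.sum_congr rfl fun i _ => by
            rw [Finset.mul_sum]
            exact Finset.sum_congr rfl fun j _ => by ring
      _ = μ * ((w:ℝ) * h) := by rw [h2]
  have step3 : ∑ i : Fin w, ∑ j : Fin w, (if i ≤ j then I (j.val + 1 - i.val) else 0)
      ≤ w * ((Real.exp 1 + 4) * k / μ) := by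
    have hsi := sum_I_le (w := w) I hI0
    have hIb : ∀ d : ℕ, I (d+1) ≤ (if μ * ((d:ℝ)+1) < 1 then (k:ℝ) * (Real.log (1/(μ*((d:ℝ)+1))) + 1) else 0)
        + (k:ℝ) * Real.exp (1 - μ*((d:ℝ)+1)) := by
      intro d
      rw [hIdef]
      simp only
      have hcast : (((d+1 : ℕ)) : ℝ) = (d:ℝ) + 1 := by push_cast; ring
      rw [hcast]
      split_ifs with hlt
      · have : (0:ℝ) ≤ (k:ℝ) * Real.exp (1 - μ*((d:ℝ)+1)) := by positivity
        linarith
      · simp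
    have hsum2 : ∑ d ∈ Finset.range w, I (d+1) ≤ (Real.exp 1 + 4) * k / μ := by
      calc ∑ d ∈ Finset.range w, I (d+1)
          ≤ ∑ d ∈ Finset.range w, ((if μ * ((d:ℝ)+1) < 1 then (k:ℝ) * (Real.log (1/(μ*((d:ℝ)+1))) + 1) else 0)
            + (k:ℝ) * Real.exp (1 - μ*((d:ℝ)+1))) := Finset.sum_le_sum (fun d _ => hIb d)
        _ = (∑ d ∈ Finset.range w, (if μ * ((d:ℝ)+1) < 1 then (k:ℝ) * (Real.log (1/(μ*((d:ℝ)+1))) + 1) else 0))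
            + ∑ d ∈ Finset.range w, (k:ℝ) * Real.exp (1 - μ*((d:ℝ)+1)) := Finset.sum_add_distrib
        _ ≤ 4 * k / μ + (k:ℝ) * (Real.exp 1 / μ) := by
            have ha := sum_logpart_le h0 h1 k w
            have hb : ∑ d ∈ Finset.range w, (k:ℝ) * Real.exp (1 - μ*((d:ℝ)+1))
                ≤ (k:ℝ) * (Real.exp 1 / μ) := by
              rw [← Finset.mul_sum]
              apply mul_le_mul_of_nonneg_left (sum_exp_le h0 w) (by positivity)
            exact add_le_add ha hb
        _ = (Real.exp 1 + 4) * k / μ := by field_simp; ring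
    calc ∑ i : Fin w, ∑ j : Fin w, (if i ≤ j then I (j.val + 1 - i.val) else 0)
        ≤ w * ∑ d ∈ Finset.range w, I (d+1) := hsi
      _ ≤ w * ((Real.exp 1 + 4) * k / μ) := by
          apply mul_le_mul_of_nonneg_left hsum2 (by positivity)
  linarith [step1, step2 ▸ step1, step3]


def picN (l0 : ℕ) (m : Fin w) : ℕ :=
  ∑ i : Fin w, ∑ j : Fin w, (if i ≤ m ∧ m ≤ j ∧ j.val < i.val + l0 then 1 else 0)

def pic (l0 t h : ℕ) : Fin w → Fin w → ℕ := fun i j =>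
  (if i ≤ j ∧ j.val < i.val + l0 then t else 0) + (if i = j then h - t * picN l0 i else 0)

lemma picN_le (l0 : ℕ) (m : Fin w) : picN l0 m ≤ l0 * l0 := by
  have inner : ∀ i : Fin w, (∑ j : Fin w, if i ≤ m ∧ m ≤ j ∧ j.val < i.val + l0 then 1 else 0)
      ≤ (if i ≤ m ∧ m.val < i.val + l0 then l0 else 0) := by
    intro i
    by_cases hcond : i ≤ m ∧ m.val < i.val + l0
    · rw [if_pos hcond]
      have hj : ∀ j : Fin w, (if i ≤ m ∧ m ≤ j ∧ j.val < i.val + l0 then 1 else 0)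
          ≤ (if m.val ≤ j.val ∧ j.val < i.val + l0 then 1 else 0) := by
        intro j
        split_ifs with ha hb
        · exact le_refl 1
        · exact absurd ⟨Fin.le_def.mp ha.2.1, ha.2.2⟩ hb
        · exact Nat.zero_le _
        · exact le_refl 0
      calc (∑ j : Fin w, if i ≤ m ∧ m ≤ j ∧ j.val < i.val + l0 then 1 else 0)
          ≤ ∑ j : Fin w, (if m.val ≤ j.val ∧ j.val < i.val + l0 then 1 else 0) :=
            Finset.sum_le_sum (fun j _ => hj j)
        _ = ∑ v ∈ Finset.range w, (if m.val ≤ v ∧ v < i.val + l0 then 1 else 0) :=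
            Fin.sum_univ_eq_sum_range (fun v => if m.val ≤ v ∧ v < i.val + l0 then 1 else 0) w
        _ ≤ l0 := by
            rw [← Finset.sum_filter, Finset.sum_const, smul_eq_mul, mul_one]
            have hsub : (Finset.range w).filter (fun v => m.val ≤ v ∧ v < i.val + l0)
                ⊆ Finset.Ico m.val (i.val + l0) := by
              intro v hv
              simp only [Finset.mem_filter, Finset.mem_range, Finset.mem_Ico] at hv ⊢
              omega
            have := Finset.card_le_card hsub
            rw [Nat.card_Ico] at this
            have hiM : i.val ≤ m.val := Fin.le_def.mp hcond.1
            omega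
    · rw [if_neg hcond]
      have hz : ∀ j : Fin w, (if i ≤ m ∧ m ≤ j ∧ j.val < i.val + l0 then 1 else 0) = 0 := by
        intro j
        rw [if_neg]
        rintro ⟨ha, hb, hcc⟩
        exact hcond ⟨ha, lt_of_le_of_lt (Fin.le_def.mp hb) hcc⟩
      simp [hz]
  show (∑ i : Fin w, ∑ j : Fin w, (if i ≤ m ∧ m ≤ j ∧ j.val < i.val + l0 then 1 else 0)) ≤ l0 * l0
  calc (∑ i : Fin w, ∑ j : Fin w, (if i ≤ m ∧ m ≤ j ∧ j.val < i.val + l0 then 1 else 0))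
      ≤ ∑ i : Fin w, (if i ≤ m ∧ m.val < i.val + l0 then l0 else 0) :=
        Finset.sum_le_sum (fun i _ => inner i)
    _ = ∑ v ∈ Finset.range w, (if v ≤ m.val ∧ m.val < v + l0 then l0 else 0) := by
        rw [← Fin.sum_univ_eq_sum_range (fun v => if v ≤ m.val ∧ m.val < v + l0 then l0 else 0) w]
        exact Finset.sum_congr rfl fun i _ => if_congr (and_congr Fin.le_def Iff.rfl) rfl rfl
    _ ≤ l0 * l0 := by
        rw [← Finset.sum_filter, Finset.sum_const, smul_eq_mul]
        have hsub : (Finset.range w).filter (fun v => v ≤ m.val ∧ m.val < v + l0)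
            ⊆ Finset.Ico (m.val + 1 - l0) (m.val + 1) := by
          intro v hv
          simp only [Finset.mem_filter, Finset.mem_range, Finset.mem_Ico] at hv ⊢
          omega
        have := Finset.card_le_card hsub
        rw [Nat.card_Ico] at this
        have h2 : ((Finset.range w).filter (fun v => v ≤ m.val ∧ m.val < v + l0)).card ≤ l0 := by omega
        exact Nat.mul_le_mul h2 (le_refl l0)

lemma base_sum (l0 t : ℕ) (m : Fin w) :
    (∑ i : Fin w, ∑ j : Fin w, (if i ≤ m ∧ m ≤ j then
      (if i ≤ j ∧ j.val < i.val + l0 then t else 0) else 0)) = t * picN l0 m := by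
  have hcong : ∀ i j : Fin w, (if i ≤ m ∧ m ≤ j then
      (if i ≤ j ∧ j.val < i.val + l0 then t else 0) else 0)
      = t * (if i ≤ m ∧ m ≤ j ∧ j.val < i.val + l0 then 1 else 0) := by
    intro i j
    by_cases hA : i ≤ m ∧ m ≤ j
    · rw [if_pos hA]
      by_cases hB : j.val < i.val + l0
      · rw [if_pos ⟨hA.1.trans hA.2, hB⟩, if_pos ⟨hA.1, hA.2, hB⟩, mul_one]
      · rw [if_neg (fun hh => hB hh.2), if_neg (fun hh => hB hh.2.2), mul_zero]
    · rw [if_neg hA, if_neg (fun hh => hA ⟨hh.1, hh.2.1⟩), mul_zero]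
  rw [Finset.sum_congr rfl fun i _ => Finset.sum_congr rfl fun j _ => hcong i j]
  show _ = t * (∑ i : Fin w, ∑ j : Fin w, (if i ≤ m ∧ m ≤ j ∧ j.val < i.val + l0 then 1 else 0))
  rw [Finset.mul_sum]
  exact Finset.sum_congr rfl fun i _ => (Finset.mul_sum _ _ _).symm

lemma isKostant_pic (l0 t h : ℕ) (hth : t * (l0 * l0) ≤ h) :
    IsKostant (fun _ : Fin w => h) (pic l0 t h) := by
  constructor
  · intro i j hji
    show (if i ≤ j ∧ j.val < i.val + l0 then t else 0) + (if i = j then h - t * picN l0 i else 0) = 0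
    rw [if_neg (fun hh => absurd hh.1 (not_le.mpr hji)),
      if_neg (by rintro rfl; exact lt_irrefl _ hji)]
  · intro m
    have hsplit : ∀ i j : Fin w, (if i ≤ m ∧ m ≤ j then pic l0 t h i j else 0)
        = (if i ≤ m ∧ m ≤ j then (if i ≤ j ∧ j.val < i.val + l0 then t else 0) else 0)
          + (if i ≤ m ∧ m ≤ j then (if i = j then h - t * picN l0 i else 0) else 0) := by
      intro i j
      by_cases hA : i ≤ m ∧ m ≤ j
      · rw [if_pos hA, if_pos hA, if_pos hA]; rfl
      · rw [if_neg hA, if_neg hA, if_neg hA]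
    rw [Finset.sum_congr rfl fun i _ => Finset.sum_congr rfl fun j _ => hsplit i j]
    have hsum : ∀ i : Fin w, ∑ j : Fin w, ((if i ≤ m ∧ m ≤ j then (if i ≤ j ∧ j.val < i.val + l0 then t else 0) else 0)
          + (if i ≤ m ∧ m ≤ j then (if i = j then h - t * picN l0 i else 0) else 0))
        = (∑ j : Fin w, (if i ≤ m ∧ m ≤ j then (if i ≤ j ∧ j.val < i.val + l0 then t else 0) else 0))
          + ∑ j : Fin w, (if i ≤ m ∧ m ≤ j then (if i = j then h - t * picN l0 i else 0) else 0) :=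
      fun i => Finset.sum_add_distrib
    rw [Finset.sum_congr rfl fun i _ => hsum i, Finset.sum_add_distrib, base_sum,
      diag_sum m (fun i => h - t * picN l0 i)]
    have hle : t * picN l0 m ≤ h :=
      le_trans (Nat.mul_le_mul (le_refl t) (picN_le l0 m)) hth
    show t * picN l0 m + (h - t * picN l0 m) = h
    omega

lemma count_ge (l0 : ℕ) (h1 : 1 ≤ l0) (hlw : l0 ≤ w) :
    l0 * (w + 1 - l0) ≤ ∑ i : Fin w, ∑ j : Fin w, (if i ≤ j ∧ j.val < i.val + l0 then 1 else 0) := by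
  have inner : ∀ i : Fin w, (if i.val + l0 ≤ w then l0 else 0)
      ≤ ∑ j : Fin w, (if i ≤ j ∧ j.val < i.val + l0 then 1 else 0) := by
    intro i
    by_cases hcnd : i.val + l0 ≤ w
    · rw [if_pos hcnd]
      have hre : ∑ j : Fin w, (if i ≤ j ∧ j.val < i.val + l0 then 1 else 0)
          = ∑ v ∈ Finset.range w, (if i.val ≤ v ∧ v < i.val + l0 then 1 else 0) := by
        rw [← Fin.sum_univ_eq_sum_range (fun v => if i.val ≤ v ∧ v < i.val + l0 then 1 else 0) w]
        exact Finset.sum_congr rfl fun j _ => if_congr (and_congr Fin.le_def Iff.rfl) rfl rfl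
      rw [hre, ← Finset.sum_filter]
      have hfl : (Finset.range w).filter (fun v => i.val ≤ v ∧ v < i.val + l0)
          = Finset.Ico i.val (i.val + l0) := by
        ext v
        simp only [Finset.mem_filter, Finset.mem_range, Finset.mem_Ico]
        omega
      rw [hfl, Finset.sum_const, smul_eq_mul, mul_one, Nat.card_Ico]
      omega
    · rw [if_neg hcnd]; exact Nat.zero_le _
  calc l0 * (w + 1 - l0) = ∑ v ∈ Finset.range w, (if v + l0 ≤ w then l0 else 0) := by
        rw [← Finset.sum_filter]
        have hfl : (Finset.range w).filter (fun v => v + l0 ≤ w) = Finset.range (w + 1 - l0) := by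
          ext v
          simp only [Finset.mem_filter, Finset.mem_range]
          omega
        rw [hfl, Finset.sum_const, smul_eq_mul, Finset.card_range, mul_comm]
    _ = ∑ i : Fin w, (if i.val + l0 ≤ w then l0 else 0) :=
        (Fin.sum_univ_eq_sum_range (fun v => if v + l0 ≤ w then l0 else 0) w).symm
    _ ≤ _ := Finset.sum_le_sum (fun i _ => inner i)

lemma lower_main (k h t l0 : ℕ) (hk : 1 ≤ k) (hl0 : 1 ≤ l0) (hlw : l0 ≤ w)
    (hth : t * (l0 * l0) ≤ h) :
    ((l0 * (w + 1 - l0) * min t (k-1) : ℕ) : ℝ) * Real.log 2 ≤ Lcol k h w := by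
  set c := pic (w := w) l0 t h with hcdef
  have hc : IsKostant (fun _ : Fin w => h) c := isKostant_pic l0 t h hth
  have hfac : ∀ i j : Fin w, (if i ≤ j ∧ j.val < i.val + l0 then 2 ^ (min t (k-1)) else 1)
      ≤ (if i ≤ j then Nat.choose (c i j + k - 1) (k - 1) else 1) := by
    intro i j
    by_cases hshort : i ≤ j ∧ j.val < i.val + l0
    · rw [if_pos hshort, if_pos hshort.1]
      have hct : t ≤ c i j := by
        rw [hcdef]
        show t ≤ (if i ≤ j ∧ j.val < i.val + l0 then t else 0) + _
        rw [if_pos hshort]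
        exact Nat.le_add_right _ _
      calc 2 ^ (min t (k-1)) ≤ (t + (k-1)).choose (k-1) := two_pow_min_le t (k-1)
        _ ≤ (c i j + (k-1)).choose (k-1) := Nat.choose_le_choose _ (by omega)
        _ = (c i j + k - 1).choose (k-1) := by congr 1; omega
    · rw [if_neg hshort]
      split_ifs
      · exact Nat.one_le_iff_ne_zero.mpr (Nat.choose_pos (by omega)).ne'
      · exact le_refl 1
  have hprod : 2 ^ (l0 * (w + 1 - l0) * min t (k-1))
      ≤ ∏ i : Fin w, ∏ j : Fin w, (if i ≤ j then Nat.choose (c i j + k - 1) (k - 1) else 1) := by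
    have h1 : (∏ i : Fin w, ∏ j : Fin w, (if i ≤ j ∧ j.val < i.val + l0 then 2 ^ (min t (k-1)) else 1))
        ≤ ∏ i : Fin w, ∏ j : Fin w, (if i ≤ j then Nat.choose (c i j + k - 1) (k - 1) else 1) :=
      Finset.prod_le_prod' (fun i _ => Finset.prod_le_prod' (fun j _ => hfac i j))
    have h2 : (∏ i : Fin w, ∏ j : Fin w, (if i ≤ j ∧ j.val < i.val + l0 then 2 ^ (min t (k-1)) else 1))
        = (2 ^ (min t (k-1))) ^ (∑ i : Fin w, ∑ j : Fin w, (if i ≤ j ∧ j.val < i.val + l0 then 1 else 0)) := by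
      have hcong : ∀ i j : Fin w, (if i ≤ j ∧ j.val < i.val + l0 then 2 ^ (min t (k-1)) else 1)
          = (2 ^ (min t (k-1))) ^ (if i ≤ j ∧ j.val < i.val + l0 then 1 else 0) := by
        intro i j; split_ifs <;> simp
      rw [Finset.prod_congr rfl fun i _ => Finset.prod_congr rfl fun j _ => hcong i j]
      rw [Finset.prod_congr rfl fun i (_ : i ∈ Finset.univ) => Finset.prod_pow_eq_pow_sum Finset.univ _ _]
      exact Finset.prod_pow_eq_pow_sum Finset.univ _ _
    calc 2 ^ (l0 * (w + 1 - l0) * min t (k-1))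
        ≤ 2 ^ ((∑ i : Fin w, ∑ j : Fin w, (if i ≤ j ∧ j.val < i.val + l0 then 1 else 0)) * min t (k-1)) := by
          apply Nat.pow_le_pow_right (by norm_num)
          exact Nat.mul_le_mul (count_ge l0 hl0 hlw) (le_refl _)
      _ = (2 ^ (min t (k-1))) ^ (∑ i : Fin w, ∑ j : Fin w, (if i ≤ j ∧ j.val < i.val + l0 then 1 else 0)) := by
          rw [← pow_mul, mul_comm]
      _ ≤ _ := h2 ▸ h1
  have h2T : 2 ^ (l0 * (w + 1 - l0) * min t (k-1)) ≤ Tcol k (fun _ : Fin w => h) :=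
    le_trans hprod (tcol_ge k h hc)
  rw [Lcol]
  have hlog := Real.log_le_log (show (0:ℝ) < (2:ℝ) ^ (l0 * (w + 1 - l0) * min t (k-1)) by positivity)
    (show ((2:ℝ) ^ (l0 * (w + 1 - l0) * min t (k-1))) ≤ ((Tcol k (fun _ : Fin w => h) : ℕ) : ℝ) by
      exact_mod_cast h2T)
  rw [Real.log_pow] at hlog
  exact hlog


-- small-context arithmetic helpers
lemma sq4 {Hr Kr : ℝ} (hle : Hr ≤ 4*Kr) (hK : 0 ≤ Kr) : Hr*Kr ≤ (2*Kr)^2 := by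
  nlinarith [mul_le_mul_of_nonneg_right hle hK]

lemma case1_minH {S Kr Hr D : ℝ} (hS : S ≤ 2*Kr) (hKD : Kr ≤ D*Hr) (hH : 0 ≤ Hr) (hD : 1 ≤ D) :
    S ≤ Hr*(4*D) := by
  nlinarith [mul_nonneg (le_trans zero_le_one hD) hH]

lemma case1_minK {S Kr D : ℝ} (hS : S ≤ 2*Kr) (hD : 1 ≤ D) (hK : 2 ≤ Kr) :
    S ≤ (Kr - 1)*(4*D) := by
  nlinarith [mul_le_mul_of_nonneg_left hD (show (0:ℝ) ≤ 4*(Kr-1) by linarith)]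

lemma sqlow {sr Kr Hr : ℝ} (hle : (sr*sr)*Kr ≤ Hr) (hK : 0 ≤ Kr) : (sr*Kr)^2 ≤ Hr*Kr := by
  nlinarith [mul_le_mul_of_nonneg_right hle hK]

lemma sqrt_up {Hr Kr sr : ℝ} (hK : 0 ≤ Kr) (hs : 1 ≤ sr) (hr : Hr ≤ ((sr+1)*(sr+1))*Kr) :
    Hr*Kr ≤ (2*(sr*Kr))^2 := by
  have e1 : Hr*Kr ≤ (((sr+1)*(sr+1))*Kr)*Kr := mul_le_mul_of_nonneg_right hr hK
  have e2 : (sr+1)*(sr+1) ≤ (2*sr)*(2*sr) := by nlinarith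
  have e3 : ((sr+1)*(sr+1))*(Kr*Kr) ≤ ((2*sr)*(2*sr))*(Kr*Kr) :=
    mul_le_mul_of_nonneg_right e2 (mul_nonneg hK hK)
  nlinarith [e1, e3]

lemma prod3_bound {Wr S sr Kr A B : ℝ} (hW0 : 0 ≤ Wr) (hS0 : 0 ≤ S) (hA : 0 ≤ A) (hs : 0 ≤ sr)
    (hW : Wr ≤ 2*A) (hS : S ≤ 2*(sr*Kr)) (hK : Kr ≤ 2*B) :
    Wr*S/8 ≤ sr*A*B := by
  have e1 : Wr*S ≤ (2*A)*(2*(sr*Kr)) := mul_le_mul hW hS hS0 (by linarith)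
  have e2 : (A*sr)*Kr ≤ (A*sr)*(2*B) := mul_le_mul_of_nonneg_left hK (by positivity)
  nlinarith [e1, e2]

lemma prod3_bound' {Wr S l Kr A B sd : ℝ} (hW0 : 0 ≤ Wr) (hK0 : 0 ≤ Kr) (hA : 0 ≤ A) (hl : 0 ≤ l)
    (hsd : 1 ≤ sd) (hS : S ≤ sd*(Wr*Kr)) (h4 : Wr ≤ 4*l) (h2 : Wr ≤ 2*A) (hB : Kr ≤ 2*B) :
    Wr*S/(16*sd) ≤ l*A*B := by
  have hsd0 : (0:ℝ) < sd := by linarith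
  rw [div_le_iff₀ (by positivity)]
  have e0 : Wr*S ≤ Wr*(sd*(Wr*Kr)) := mul_le_mul_of_nonneg_left hS hW0
  have e1 : Wr*Wr ≤ (4*l)*(2*A) := mul_le_mul h4 h2 hW0 (by linarith)
  have e3 : sd*((Wr*Wr)*Kr) ≤ sd*(((4*l)*(2*A))*Kr) :=
    mul_le_mul_of_nonneg_left (mul_le_mul_of_nonneg_right e1 hK0) hsd0.le
  have e2 : (l*A)*Kr ≤ (l*A)*(2*B) := mul_le_mul_of_nonneg_left hB (by positivity)
  have e4 : (8*sd)*((l*A)*Kr) ≤ (8*sd)*((l*A)*(2*B)) :=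
    mul_le_mul_of_nonneg_left e2 (by positivity)
  nlinarith [e0, e3, e4]

lemma swk {Hr Kr Wr D : ℝ} (hH : Hr ≤ D*(Kr*Wr^2)) (hK : 0 ≤ Kr) : Hr*Kr ≤ D*(Wr*Kr)^2 := by
  nlinarith [mul_le_mul_of_nonneg_right hH hK]

lemma kk_bound {Kr Hr D : ℝ} (hKD : Kr ≤ D*Hr) (hK : 0 ≤ Kr) : Kr*Kr ≤ D*(Hr*Kr) := by
  nlinarith [mul_le_mul_of_nonneg_right hKD hK]

end KAux

set_option maxHeartbeats 2000000 in
/-- If `k ≻ 1`, `k ≼ h` and `h ≼ k·w²`, then `L^k[h,w] ≍ w·√(h·k)`. -/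
theorem Lcol_asymp_mid (h w k : ℕ → ℕ)
    (hh : ∀ n, 0 < h n) (hw : ∀ n, 0 < w n) (hk : ∀ n, 0 < k n)
    (hk1 : Tendsto (fun n => (1 : ℝ) / k n) atTop (nhds 0))
    (hkh : ∃ c : ℝ, 0 < c ∧ ∀ᶠ n : ℕ in atTop, (k n : ℝ) ≤ c * (h n : ℝ))
    (hhkw : ∃ c : ℝ, 0 < c ∧ ∀ᶠ n : ℕ in atTop,
      (h n : ℝ) ≤ c * ((k n : ℝ) * (w n : ℝ) ^ 2)) :
    ∃ a b : ℝ, 0 < a ∧ a ≤ b ∧ ∀ᶠ n : ℕ in atTop,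
      a * ((w n : ℝ) * Real.sqrt ((h n : ℝ) * (k n : ℝ))) ≤ Lcol (k n) (h n) (w n) ∧
      Lcol (k n) (h n) (w n) ≤ b * ((w n : ℝ) * Real.sqrt ((h n : ℝ) * (k n : ℝ))) := by
  obtain ⟨C₁, hC₁pos, hC₁⟩ := hkh
  obtain ⟨C₂, hC₂pos, hC₂⟩ := hhkw
  set D₁ : ℝ := max C₁ 1 with hD₁def
  set D₂ : ℝ := max C₂ 1 with hD₂def
  have hD₁1 : (1:ℝ) ≤ D₁ := le_max_right _ _
  have hD₂1 : (1:ℝ) ≤ D₂ := le_max_right _ _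
  have hsD₁ : (1:ℝ) ≤ Real.sqrt D₁ := by
    rw [show (1:ℝ) = Real.sqrt 1 by rw [Real.sqrt_one]]
    exact Real.sqrt_le_sqrt hD₁1
  have hsD₂ : (1:ℝ) ≤ Real.sqrt D₂ := by
    rw [show (1:ℝ) = Real.sqrt 1 by rw [Real.sqrt_one]]
    exact Real.sqrt_le_sqrt hD₂1
  set X : ℝ := max D₁ (max (Real.sqrt D₂) 2) with hXdef
  have hX2 : (2:ℝ) ≤ X := le_trans (le_max_right _ _) (le_max_right _ _)
  have hXD₁ : D₁ ≤ X := le_max_left _ _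
  have hXD₂ : Real.sqrt D₂ ≤ X := le_trans (le_max_left _ _) (le_max_right _ _)
  have hlog2 : 0 < Real.log 2 := Real.log_pos (by norm_num)
  have hlog2le : Real.log 2 ≤ 1 := by
    have := Real.log_le_sub_one_of_pos (show (0:ℝ) < 2 by norm_num)
    linarith
  have he1 : (0:ℝ) < Real.exp 1 := Real.exp_pos 1
  set a : ℝ := Real.log 2 / (16 * X) with hadef
  set b : ℝ := (Real.exp 1 + 5) * (1 + Real.sqrt D₁) with hbdef
  have hXpos : (0:ℝ) < 16 * X := by nlinarith
  have ha0 : 0 < a := div_pos hlog2 hXpos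
  have hb1 : (1:ℝ) ≤ b := by
    have e := mul_le_mul (show (1:ℝ) ≤ Real.exp 1 + 5 by linarith)
      (show (1:ℝ) ≤ 1 + Real.sqrt D₁ by linarith) (by norm_num) (by linarith)
    calc (1:ℝ) = 1*1 := by ring
    _ ≤ (Real.exp 1 + 5) * (1 + Real.sqrt D₁) := e
    _ = b := by rw [hbdef]
  have hab : a ≤ b := by
    have ha1 : a ≤ 1 := by
      rw [hadef, div_le_one hXpos]
      linarith
    linarith
  refine ⟨a, b, ha0, hab, ?_⟩
  have hk3 : ∀ᶠ n : ℕ in atTop, (3:ℝ) ≤ k n := by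
    have hev := hk1.eventually (gt_mem_nhds (show (0:ℝ) < 1/3 by norm_num))
    filter_upwards [hev] with n hn
    have hkp : (0:ℝ) < k n := by exact_mod_cast hk n
    rw [div_lt_div_iff₀ hkp (by norm_num)] at hn
    linarith
  filter_upwards [hC₁, hC₂, hk3] with n h1 h2 h3
  set K := k n with hKdef
  set H := h n with hHdef
  set W := w n with hWdef
  have hK1 : 1 ≤ K := hk n
  have hH1 : 1 ≤ H := hh n
  have hW1 : 1 ≤ W := hw n
  have hK2 : 2 ≤ K := by
    have : (2:ℝ) < K := by linarith
    exact_mod_cast this.le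
  have hKR : (0:ℝ) < K := by exact_mod_cast hK1
  have hHR : (0:ℝ) < H := by exact_mod_cast hH1
  have hWR : (0:ℝ) < W := by exact_mod_cast hW1
  have hKD : (K:ℝ) ≤ D₁ * H :=
    le_trans h1 (mul_le_mul_of_nonneg_right (le_max_left _ _) hHR.le)
  have hHD : (H:ℝ) ≤ D₂ * ((K:ℝ) * (W:ℝ)^2) :=
    le_trans h2 (mul_le_mul_of_nonneg_right (le_max_left _ _) (by positivity))
  set S := Real.sqrt ((H:ℝ) * K) with hSdef
  have hS0 : 0 < S := Real.sqrt_pos.mpr (by positivity)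
  have hKm1 : ((K - 1 : ℕ) : ℝ) = (K:ℝ) - 1 := by
    rw [Nat.cast_sub hK1]; norm_num
  have hKm2 : (K:ℝ)/2 ≤ ((K - 1 : ℕ) : ℝ) := by rw [hKm1]; linarith
  constructor
  · -- LOWER BOUND
    rcases Nat.lt_or_ge H (4*K) with hcase | hcase
    · -- case 1 : H < 4K, use l0 = 1, t = H
      have hmain := KAux.lower_main (w := W) K H H 1 hK1 (le_refl 1) hW1 (by simpa using le_refl H)
      have hsimp : 1 * (W + 1 - 1) * min H (K-1) = W * min H (K-1) := by
        simp
      rw [hsimp] at hmain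
      have hcast : ((W * min H (K-1) : ℕ) : ℝ) = (W:ℝ) * min (H:ℝ) ((K-1:ℕ):ℝ) := by
        push_cast
        ring
      rw [hcast] at hmain
      -- S ≤ 2K
      have hSle : S ≤ 2*(K:ℝ) := by
        rw [hSdef]
        have h4 : (H:ℝ) * K ≤ (2*(K:ℝ))^2 :=
          KAux.sq4 (by exact_mod_cast hcase.le) hKR.le
        calc Real.sqrt ((H:ℝ)*K) ≤ Real.sqrt ((2*(K:ℝ))^2) := Real.sqrt_le_sqrt h4
        _ = 2*(K:ℝ) := Real.sqrt_sq (by positivity)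
      have hD₁H : (0:ℝ) ≤ D₁*H := by positivity
      have hHge : (K:ℝ)/D₁ ≤ H := by
        rw [div_le_iff₀ (by linarith), mul_comm]
        exact hKD
      have hmin : S/(4*D₁) ≤ min (H:ℝ) ((K-1:ℕ):ℝ) := by
        apply le_min
        · -- S/(4D₁) ≤ H
          rw [div_le_iff₀ (by linarith)]
          exact KAux.case1_minH hSle hKD hHR.le hD₁1
        · rw [hKm1, div_le_iff₀ (by linarith)]
          exact KAux.case1_minK hSle hD₁1 (by exact_mod_cast hK2)
      have ha4 : a ≤ Real.log 2 / (4*D₁) := by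
        apply div_le_div_of_nonneg_left hlog2.le (by linarith)
        linarith
      calc a * ((W:ℝ) * S) ≤ (Real.log 2 / (4*D₁)) * ((W:ℝ) * S) :=
            mul_le_mul_of_nonneg_right ha4 (by positivity)
        _ = ((W:ℝ) * (S/(4*D₁))) * Real.log 2 := by ring
        _ ≤ ((W:ℝ) * min (H:ℝ) ((K-1:ℕ):ℝ)) * Real.log 2 := by
            apply mul_le_mul_of_nonneg_right _ hlog2.le
            exact mul_le_mul_of_nonneg_left hmin hWR.le
        _ ≤ Lcol K H W := hmain
    · -- case 2 : 4K ≤ H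
      set q := H / K with hqdef
      have hq4 : 4 ≤ q := (Nat.le_div_iff_mul_le (by omega)).mpr (by omega)
      set s := Nat.sqrt q with hsdef
      have hs2 : 2 ≤ s := by
        rw [hsdef]
        exact Nat.le_sqrt.mpr (by omega)
      have hssq : s * s ≤ q := Nat.sqrt_le q
      have hqlt : q < (s+1)*(s+1) := Nat.lt_succ_sqrt q
      have hKq : q * K ≤ H := Nat.div_mul_le_self H K
      have hHub : H < (q+1)*K := by
        rw [hqdef]
        exact (Nat.div_lt_iff_lt_mul (show 0 < K by omega)).mp (Nat.lt_succ_self _)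
      -- real : s*K ≤ S ≤ 2sK
      have hsKS : (s:ℝ)*K ≤ S := by
        rw [hSdef]
        have h4 : ((s:ℝ)*K)^2 ≤ (H:ℝ)*K := by
          have hns : (s*s)*K ≤ H := le_trans (Nat.mul_le_mul_right K hssq) hKq
          have hr : ((s:ℝ)*(s:ℝ))*K ≤ H := by exact_mod_cast hns
          exact KAux.sqlow hr hKR.le
        calc (s:ℝ)*K = Real.sqrt (((s:ℝ)*K)^2) := (Real.sqrt_sq (by positivity)).symm
        _ ≤ Real.sqrt ((H:ℝ)*K) := Real.sqrt_le_sqrt h4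
      have hSsK : S ≤ 2*((s:ℝ)*K) := by
        rw [hSdef]
        have h4 : (H:ℝ)*K ≤ (2*((s:ℝ)*K))^2 := by
          have hns : H ≤ ((s+1)*(s+1))*K :=
            le_trans hHub.le (Nat.mul_le_mul_right K (Nat.succ_le_of_lt hqlt))
          have hr : (H:ℝ) ≤ (((s:ℝ)+1)*((s:ℝ)+1))*K := by exact_mod_cast hns
          have hsR : (1:ℝ) ≤ s := by
            have : (1:ℕ) ≤ s := by omega
            exact_mod_cast this
          exact KAux.sqrt_up hKR.le hsR hr
        calc Real.sqrt ((H:ℝ)*K) ≤ Real.sqrt ((2*((s:ℝ)*K))^2) := Real.sqrt_le_sqrt h4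
        _ = 2*((s:ℝ)*K) := Real.sqrt_sq (by positivity)
      have hKsle : K * (s*s) ≤ H := by
        calc K * (s*s) = (s*s)*K := by ring
        _ ≤ q*K := Nat.mul_le_mul_right K hssq
        _ ≤ H := hKq
      rcases le_or_gt (2*s) W with hcaseb | hcaseb
      · -- case 2a : 2s ≤ W, l0 = s, t = H/(s*s)
        have ht : K ≤ H/(s*s) := (Nat.le_div_iff_mul_le (by positivity)).mpr hKsle
        have hmain := KAux.lower_main (w := W) K H (H/(s*s)) s hK1 (by omega) (by omega)
          (Nat.div_mul_le_self H (s*s))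
        have hminEq : min (H/(s*s)) (K-1) = K-1 := min_eq_right (by omega)
        rw [hminEq] at hmain
        have hcast : ((s * (W + 1 - s) * (K-1) : ℕ) : ℝ)
            = (s:ℝ) * ((W + 1 - s : ℕ):ℝ) * ((K-1:ℕ):ℝ) := by push_cast; ring
        rw [hcast] at hmain
        have hWs : (W:ℝ) ≤ 2*((W + 1 - s : ℕ):ℝ) := by
          have hns : W ≤ 2*(W + 1 - s) := by omega
          exact_mod_cast hns
        have hprod : (W:ℝ)*S/8 ≤ (s:ℝ) * ((W + 1 - s : ℕ):ℝ) * ((K-1:ℕ):ℝ) :=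
          KAux.prod3_bound hWR.le hS0.le (by positivity) (by positivity)
            hWs hSsK (by linarith [hKm2])
        have ha8 : a ≤ Real.log 2 / 8 := by
          apply div_le_div_of_nonneg_left hlog2.le (by norm_num)
          linarith
        calc a * ((W:ℝ) * S) ≤ (Real.log 2 / 8) * ((W:ℝ) * S) :=
              mul_le_mul_of_nonneg_right ha8 (by positivity)
          _ = ((W:ℝ)*S/8) * Real.log 2 := by ring
          _ ≤ ((s:ℝ) * ((W + 1 - s : ℕ):ℝ) * ((K-1:ℕ):ℝ)) * Real.log 2 :=
              mul_le_mul_of_nonneg_right hprod hlog2.le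
          _ ≤ Lcol K H W := hmain
      · -- case 2b : W < 2s, l0 = max 1 (W/2), t = H/(l0*l0)
        set l0 := max 1 (W/2) with hl0def
        have hl01 : 1 ≤ l0 := le_max_left _ _
        have hl0W2 : W/2 ≤ l0 := le_max_right _ _
        have hl0cases : l0 = 1 ∨ l0 = W/2 := max_choice _ _
        have hl0w : l0 ≤ W := by rcases hl0cases with h' | h' <;> omega
        have hl0s : l0 ≤ s := by
          apply max_le (by omega)
          omega
        have hKl : K * (l0*l0) ≤ H :=
          le_trans (Nat.mul_le_mul_left K (Nat.mul_le_mul hl0s hl0s)) hKsle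
        have ht : K ≤ H/(l0*l0) := (Nat.le_div_iff_mul_le (by positivity)).mpr hKl
        have hmain := KAux.lower_main (w := W) K H (H/(l0*l0)) l0 hK1 hl01 hl0w
          (Nat.div_mul_le_self H (l0*l0))
        have hminEq : min (H/(l0*l0)) (K-1) = K-1 := min_eq_right (by omega)
        rw [hminEq] at hmain
        have hcast : ((l0 * (W + 1 - l0) * (K-1) : ℕ) : ℝ)
            = (l0:ℝ) * ((W + 1 - l0 : ℕ):ℝ) * ((K-1:ℕ):ℝ) := by push_cast; ring
        rw [hcast] at hmain
        have hW4 : (W:ℝ) ≤ 4*(l0:ℝ) := by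
          have hns : W ≤ 4*l0 := by rcases hl0cases with h' | h' <;> omega
          exact_mod_cast hns
        have hWl : (W:ℝ) ≤ 2*((W + 1 - l0 : ℕ):ℝ) := by
          have hns : W ≤ 2*(W + 1 - l0) := by rcases hl0cases with h' | h' <;> omega
          exact_mod_cast hns
        -- S ≤ sqrt D₂ * (W*K)
        have hSWK : S ≤ Real.sqrt D₂ * ((W:ℝ)*K) := by
          rw [hSdef]
          have h4 : (H:ℝ)*K ≤ D₂ * ((W:ℝ)*K)^2 := KAux.swk hHD hKR.le
          calc Real.sqrt ((H:ℝ)*K) ≤ Real.sqrt (D₂ * ((W:ℝ)*K)^2) := Real.sqrt_le_sqrt h4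
          _ = Real.sqrt D₂ * Real.sqrt (((W:ℝ)*K)^2) := Real.sqrt_mul (by linarith) _
          _ = Real.sqrt D₂ * ((W:ℝ)*K) := by rw [Real.sqrt_sq (by positivity)]
        have hprod : (W:ℝ)*S/(16*Real.sqrt D₂) ≤ (l0:ℝ) * ((W + 1 - l0 : ℕ):ℝ) * ((K-1:ℕ):ℝ) :=
          KAux.prod3_bound' hWR.le hKR.le (by positivity) (by positivity) hsD₂
            hSWK hW4 hWl (by linarith [hKm2])
        have ha16 : a ≤ Real.log 2 / (16*Real.sqrt D₂) := by
          apply div_le_div_of_nonneg_left hlog2.le (by linarith)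
          linarith
        calc a * ((W:ℝ) * S) ≤ (Real.log 2 / (16*Real.sqrt D₂)) * ((W:ℝ) * S) :=
              mul_le_mul_of_nonneg_right ha16 (by positivity)
          _ = ((W:ℝ)*S/(16*Real.sqrt D₂)) * Real.log 2 := by ring
          _ ≤ ((l0:ℝ) * ((W + 1 - l0 : ℕ):ℝ) * ((K-1:ℕ):ℝ)) * Real.log 2 :=
              mul_le_mul_of_nonneg_right hprod hlog2.le
          _ ≤ Lcol K H W := hmain
  · -- UPPER BOUND
    rcases le_or_gt K H with hcase | hcase
    · -- K ≤ H : μ = sqrt(K/H)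
      set μ := Real.sqrt ((K:ℝ)/H) with hμdef
      have hμ0 : 0 < μ := Real.sqrt_pos.mpr (by positivity)
      have hμ1 : μ ≤ 1 := by
        rw [hμdef, show (1:ℝ) = Real.sqrt 1 by rw [Real.sqrt_one]]
        apply Real.sqrt_le_sqrt
        rw [div_le_one hHR]
        exact_mod_cast hcase
      have hub := KAux.upper_bound (w := W) K H hK1 hμ0 hμ1
      have hμH : μ * (H:ℝ) = S := by
        have h4 : (K:ℝ)/H*((H:ℝ)*H) = (H:ℝ)*K := by field_simp
        calc μ * (H:ℝ) = μ * Real.sqrt ((H:ℝ)*H) := by rw [Real.sqrt_mul_self hHR.le]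
        _ = Real.sqrt ((K:ℝ)/H*((H:ℝ)*H)) := (Real.sqrt_mul (by positivity) _).symm
        _ = S := by rw [h4, hSdef]
      have hKμ : (K:ℝ)/μ = S := by
        have hμμ : μ*μ = (K:ℝ)/H := Real.mul_self_sqrt (by positivity)
        rw [div_eq_iff hμ0.ne', ← hμH]
        calc (K:ℝ) = ((K:ℝ)/H)*H := by field_simp
        _ = (μ*μ)*H := by rw [hμμ]
        _ = μ * (H:ℝ) * μ := by ring
      calc Lcol K H W ≤ μ * ((W:ℝ) * H) + W * ((Real.exp 1 + 4) * K / μ) := hub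
        _ = (W:ℝ) * (μ * H) + W * ((Real.exp 1 + 4) * ((K:ℝ)/μ)) := by ring
        _ = (W:ℝ) * S + (Real.exp 1 + 4) * ((W:ℝ) * S) := by rw [hμH, hKμ]; ring
        _ ≤ b * ((W:ℝ) * S) := by
            have hWS : (0:ℝ) ≤ (W:ℝ)*S := by positivity
            have hb' : Real.exp 1 + 5 ≤ b := by
              have e := mul_le_mul_of_nonneg_left (show (1:ℝ) ≤ 1 + Real.sqrt D₁ by linarith)
                (show (0:ℝ) ≤ Real.exp 1 + 5 by linarith)
              rw [mul_one] at e
              linarith [e, hbdef.ge]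
            linarith [mul_le_mul_of_nonneg_right hb' hWS]
    · -- H < K : μ = 1
      have hub := KAux.upper_bound (w := W) K H hK1 (show (0:ℝ) < 1 by norm_num) (le_refl 1)
      have hHle : (H:ℝ) ≤ S := by
        rw [hSdef]
        have h4 : (H:ℝ)*H ≤ (H:ℝ)*K := by
          have : (H:ℝ) ≤ K := by exact_mod_cast hcase.le
          nlinarith
        calc (H:ℝ) = Real.sqrt ((H:ℝ)*H) := (Real.sqrt_mul_self hHR.le).symm
        _ ≤ Real.sqrt ((H:ℝ)*K) := Real.sqrt_le_sqrt h4
      have hKle : (K:ℝ) ≤ Real.sqrt D₁ * S := by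
        rw [hSdef]
        have h4 : (K:ℝ)*K ≤ D₁ * ((H:ℝ)*K) := KAux.kk_bound hKD hKR.le
        calc (K:ℝ) = Real.sqrt ((K:ℝ)*K) := (Real.sqrt_mul_self hKR.le).symm
        _ ≤ Real.sqrt (D₁ * ((H:ℝ)*K)) := Real.sqrt_le_sqrt h4
        _ = Real.sqrt D₁ * Real.sqrt ((H:ℝ)*K) := Real.sqrt_mul (by linarith) _
      calc Lcol K H W ≤ 1 * ((W:ℝ) * H) + W * ((Real.exp 1 + 4) * K / 1) := hub
        _ = (W:ℝ)*H + (Real.exp 1 + 4)*((W:ℝ)*K) := by ring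
        _ ≤ (W:ℝ)*S + (Real.exp 1 + 4)*(Real.sqrt D₁*((W:ℝ)*S)) := by
            have e1 : (W:ℝ)*H ≤ (W:ℝ)*S := mul_le_mul_of_nonneg_left hHle hWR.le
            have e2 : (W:ℝ)*K ≤ Real.sqrt D₁*((W:ℝ)*S) := by
              calc (W:ℝ)*K ≤ (W:ℝ)*(Real.sqrt D₁ * S) := mul_le_mul_of_nonneg_left hKle hWR.le
              _ = Real.sqrt D₁*((W:ℝ)*S) := by ring
            have e3 : (Real.exp 1 + 4)*((W:ℝ)*K) ≤ (Real.exp 1 + 4)*(Real.sqrt D₁*((W:ℝ)*S)) :=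
              mul_le_mul_of_nonneg_left e2 (by linarith)
            linarith [e1, e3]
        _ ≤ b * ((W:ℝ) * S) := by
            have hWS : (0:ℝ) ≤ (W:ℝ)*S := by positivity
            have hb2 : 1 + (Real.exp 1 + 4)*Real.sqrt D₁ ≤ b := by
              have : b = (Real.exp 1 + 5) * (1 + Real.sqrt D₁) := hbdef
              nlinarith [hsD₁, he1]
            linarith [mul_le_mul_of_nonneg_right hb2 hWS]
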